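/- arXiv:2504.19552 — 2 statements merged into one kernel-verified Lean document; each statement's English description precedes it below -/
import Mathlib

section
/- Let α₀, α₁, α₂ > 0 with 2α₁ + 2α₂ > d - 1, where d ≥ 2 is an integer. For r ≥ 1, define G(r) := ∫₀^∞ s^{d-2} / ((1+r+s)^{2α₁} (1+s)^{2α₂}) ds. Then there is a constant C (independent of r) such that G(r) ≤ C (1+r)^{-2α₀} for all r ≥ 1, where α₀ = α₁ + α₂ - (d-1)/2 if max(α₁,α₂) < (d-1)/2; α₀ is any value strictly less than min(α₁,α₂) if max(α₁,α₂) = (d-1)/2; and α₀ = min(α₁,α₂) if max(α₁,α₂) > (d-1)/2. -/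
open MeasureTheory Set Real

/-- Shifted power-tail integral: integrability. -/
lemma shift_integrableOn {q : ℝ} (hq : q < -1) {a c : ℝ} (hac : 0 < a + c) :
    IntegrableOn (fun s => (a + s) ^ q) (Set.Ioi c) := by
  have h : MeasurePreserving (fun x : ℝ => a + x) volume volume :=
    measurePreserving_add_left volume a
  have he : MeasurableEmbedding (fun x : ℝ => a + x) :=
    (MeasurableEquiv.addLeft a).measurableEmbedding
  have hpre : (fun x : ℝ => a + x) ⁻¹' (Set.Ioi (a + c)) = Set.Ioi c := by ext x; simp
  have h1 := integrableOn_Ioi_rpow_of_lt hq hac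
  have h2 := (h.integrableOn_comp_preimage he).2 h1
  rwa [hpre] at h2

/-- Shifted power-tail integral: value. -/
lemma shift_integral {q : ℝ} (hq : q < -1) {a c : ℝ} (hac : 0 < a + c) :
    ∫ s in Set.Ioi c, (a + s) ^ q = (a + c) ^ (q + 1) / (-(q + 1)) := by
  have h : MeasurePreserving (fun x : ℝ => a + x) volume volume :=
    measurePreserving_add_left volume a
  have he : MeasurableEmbedding (fun x : ℝ => a + x) :=
    (MeasurableEquiv.addLeft a).measurableEmbedding
  have hpre : (fun x : ℝ => a + x) ⁻¹' (Set.Ioi (a + c)) = Set.Ioi c := by ext x; simp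
  have : ∫ s in Set.Ioi c, (a + s) ^ q = ∫ x in Set.Ioi (a + c), x ^ q := by
    rw [← hpre, h.setIntegral_preimage_emb he (fun y => y ^ q) _]
  rw [this, integral_Ioi_rpow_of_lt hq hac]
  have h1 : q + 1 ≠ 0 := by linarith
  field_simp


/-- `ContinuousOn` of a shifted rpow on `(0,∞)` for positive shift. -/
lemma contOn_shift (a q : ℝ) (ha : 0 < a) :
    ContinuousOn (fun s : ℝ => (a + s) ^ q) (Set.Ioi 0) := by
  intro s hs
  have hs0 : (0:ℝ) < s := hs
  have h : ContinuousAt (fun s : ℝ => (a + s) ^ q) s := by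
    have h1 : ContinuousAt (fun x : ℝ => x ^ q) (a + s) :=
      Real.continuousAt_rpow_const _ _ (Or.inl (by positivity))
    exact h1.comp (continuous_const.add continuous_id).continuousAt
  exact h.continuousWithinAt

lemma contOn_dom (b q : ℝ) (hb : 0 ≤ b) :
    ContinuousOn (fun s : ℝ => s ^ b * (1 + s) ^ (-q)) (Set.Ioi 0) :=
  ((Real.continuous_rpow_const hb).continuousOn).mul (contOn_shift 1 (-q) one_pos)

lemma contOn_f (b c₁ c₂ r : ℝ) (hb : 0 ≤ b) (hr : 0 ≤ r) :
    ContinuousOn (fun s : ℝ => s ^ b / ((1 + r + s) ^ c₁ * (1 + s) ^ c₂)) (Set.Ioi 0) := by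
  refine ContinuousOn.div ((Real.continuous_rpow_const hb).continuousOn)
    ((contOn_shift (1 + r) c₁ (by linarith)).mul (contOn_shift 1 c₂ one_pos)) ?_
  intro s hs
  have hs0 : (0:ℝ) < s := hs
  have h1 : (0:ℝ) < (1 + r + s) ^ c₁ := Real.rpow_pos_of_pos (by linarith) _
  have h2 : (0:ℝ) < (1 + s) ^ c₂ := Real.rpow_pos_of_pos (by linarith) _
  positivity

/-- Integrability of `s^(d-2) (1+s)^{-q}` on `(0,∞)` for `q > d-1`. -/
lemma dom_integrableOn {d : ℕ} (hd : 2 ≤ d) {q : ℝ} (hq : (d:ℝ) - 1 < q) :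
    IntegrableOn (fun s : ℝ => s ^ ((d:ℝ) - 2) * (1 + s) ^ (-q)) (Set.Ioi 0) := by
  have hb : (0:ℝ) ≤ (d:ℝ) - 2 := by
    have : (2:ℝ) ≤ (d:ℝ) := by exact_mod_cast hd
    linarith
  have hco := contOn_dom ((d:ℝ) - 2) q hb
  have h01 : IntegrableOn (fun s : ℝ => s ^ ((d:ℝ) - 2) * (1 + s) ^ (-q)) (Set.Ioc 0 1) := by
    refine Integrable.mono' (g := fun _ => (1:ℝ)) (integrableOn_const ?_)
      ((hco.mono Set.Ioc_subset_Ioi_self).aestronglyMeasurable measurableSet_Ioc) ?_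
    · simp [Real.volume_Ioc]
    · filter_upwards [ae_restrict_mem measurableSet_Ioc] with s hs
      have hs0 : 0 < s := hs.1
      have hs1 : s ≤ 1 := hs.2
      rw [Real.norm_eq_abs, abs_of_nonneg (mul_nonneg (Real.rpow_nonneg hs0.le _)
        (Real.rpow_nonneg (by linarith) _))]
      have h1 : s ^ ((d:ℝ) - 2) ≤ 1 := Real.rpow_le_one hs0.le hs1 hb
      have h2 : (1 + s) ^ (-q) ≤ 1 :=
        Real.rpow_le_one_of_one_le_of_nonpos (by linarith) (by linarith)
      calc s ^ ((d:ℝ) - 2) * (1 + s) ^ (-q) ≤ 1 * 1 :=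
            mul_le_mul h1 h2 (Real.rpow_nonneg (by linarith) _) zero_le_one
        _ = 1 := by ring
  have h1i : IntegrableOn (fun s : ℝ => s ^ ((d:ℝ) - 2) * (1 + s) ^ (-q)) (Set.Ioi 1) := by
    have htail : IntegrableOn (fun s : ℝ => (1 + s) ^ ((d:ℝ) - 2 - q)) (Set.Ioi 1) :=
      shift_integrableOn (by linarith) (by norm_num)
    refine Integrable.mono' htail
      ((hco.mono (Set.Ioi_subset_Ioi zero_le_one)).aestronglyMeasurable measurableSet_Ioi) ?_
    filter_upwards [ae_restrict_mem measurableSet_Ioi] with s hs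
    have hs1 : (1:ℝ) < s := hs
    have hsp : (0:ℝ) < 1 + s := by linarith
    rw [Real.norm_eq_abs, abs_of_nonneg (mul_nonneg (Real.rpow_nonneg (by linarith) _)
      (Real.rpow_nonneg hsp.le _))]
    have h1 : s ^ ((d:ℝ) - 2) ≤ (1 + s) ^ ((d:ℝ) - 2) :=
      Real.rpow_le_rpow (by linarith) (by linarith) hb
    calc s ^ ((d:ℝ) - 2) * (1 + s) ^ (-q) ≤ (1 + s) ^ ((d:ℝ) - 2) * (1 + s) ^ (-q) :=
          mul_le_mul_of_nonneg_right h1 (Real.rpow_nonneg hsp.le _)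
      _ = (1 + s) ^ ((d:ℝ) - 2 - q) := by rw [← Real.rpow_add hsp]; ring_nf
  have hunion : Set.Ioc (0:ℝ) 1 ∪ Set.Ioi 1 = Set.Ioi 0 := Set.Ioc_union_Ioi_eq_Ioi zero_le_one
  rw [← hunion]
  exact h01.union h1i


/-- The scalar integral `G(r) = ∫₀^∞ s^{d-2} / ((1+r+s)^{2α₁} (1+s)^{2α₂}) ds`. -/
noncomputable def Gint (d : ℕ) (α₁ α₂ r : ℝ) : ℝ :=
  ∫ s in Set.Ioi (0 : ℝ), s ^ ((d : ℝ) - 2) / ((1 + r + s) ^ (2 * α₁) * (1 + s) ^ (2 * α₂))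

lemma f_integrableOn {d : ℕ} (hd : 2 ≤ d) {α₁ α₂ : ℝ} (hα₁ : 0 < α₁) (hα₂ : 0 < α₂)
    (hconv : (d : ℝ) - 1 < 2 * α₁ + 2 * α₂) {r : ℝ} (hr : 0 ≤ r) :
    IntegrableOn (fun s : ℝ =>
      s ^ ((d:ℝ) - 2) / ((1 + r + s) ^ (2 * α₁) * (1 + s) ^ (2 * α₂))) (Set.Ioi 0) := by
  have hb : (0:ℝ) ≤ (d:ℝ) - 2 := by
    have : (2:ℝ) ≤ (d:ℝ) := by exact_mod_cast hd
    linarith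
  refine Integrable.mono' (dom_integrableOn hd hconv)
    ((contOn_f _ _ _ _ hb hr).aestronglyMeasurable measurableSet_Ioi) ?_
  filter_upwards [ae_restrict_mem measurableSet_Ioi] with s hs
  have hs0 : (0:ℝ) < s := hs
  have hA : (0:ℝ) < (1 + r + s) ^ (2 * α₁) := Real.rpow_pos_of_pos (by linarith) _
  have hB : (0:ℝ) < (1 + s) ^ (2 * α₂) := Real.rpow_pos_of_pos (by linarith) _
  rw [Real.norm_eq_abs, abs_of_nonneg (by positivity)]
  have hkey : (1 + s) ^ (2 * α₁ + 2 * α₂) ≤ (1 + r + s) ^ (2 * α₁) * (1 + s) ^ (2 * α₂) := by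
    rw [Real.rpow_add (by linarith : (0:ℝ) < 1 + s)]
    exact mul_le_mul_of_nonneg_right
      (Real.rpow_le_rpow (by linarith) (by linarith) (by linarith)) hB.le
  calc s ^ ((d:ℝ) - 2) / ((1 + r + s) ^ (2 * α₁) * (1 + s) ^ (2 * α₂))
      ≤ s ^ ((d:ℝ) - 2) / (1 + s) ^ (2 * α₁ + 2 * α₂) := by
        apply div_le_div_of_nonneg_left (by positivity) (by positivity) hkey
    _ = s ^ ((d:ℝ) - 2) * (1 + s) ^ (-(2 * α₁ + 2 * α₂)) := by
        rw [Real.rpow_neg (by linarith)]; ring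

lemma theta_bound {d : ℕ} (hd : 2 ≤ d) {α₁ α₂ e : ℝ} (hα₁ : 0 < α₁) (hα₂ : 0 < α₂)
    (he0 : 0 ≤ e) (he1 : e ≤ 2 * α₁) (hq : (d:ℝ) - 1 < 2 * α₁ - e + 2 * α₂) :
    ∃ C > 0, ∀ r : ℝ, 1 ≤ r → Gint d α₁ α₂ r ≤ C * (1 + r) ^ (-e) := by
  have hb : (0:ℝ) ≤ (d:ℝ) - 2 := by
    have : (2:ℝ) ≤ (d:ℝ) := by exact_mod_cast hd
    linarith
  set q : ℝ := 2 * α₁ - e + 2 * α₂ with hqdef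
  have hdom := dom_integrableOn hd hq
  set I : ℝ := ∫ s in Set.Ioi (0:ℝ), s ^ ((d:ℝ) - 2) * (1 + s) ^ (-q) with hIdef
  have hI0 : 0 ≤ I := by
    apply setIntegral_nonneg measurableSet_Ioi
    intro s hs
    have : (0:ℝ) < s := hs
    positivity
  refine ⟨I + 1, by linarith, fun r hr => ?_⟩
  have hrp : (0:ℝ) < 1 + r := by linarith
  have hre : (0:ℝ) < (1 + r) ^ (-e) := Real.rpow_pos_of_pos hrp _
  have hmono : Gint d α₁ α₂ r ≤ (1 + r) ^ (-e) * I := by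
    rw [Gint, hIdef, ← integral_const_mul]
    refine integral_mono_of_nonneg ?_ ((hdom.const_mul _)) ?_
    · filter_upwards [ae_restrict_mem measurableSet_Ioi] with s hs
      have hs0 : (0:ℝ) < s := hs
      positivity
    · filter_upwards [ae_restrict_mem measurableSet_Ioi] with s hs
      have hs0 : (0:ℝ) < s := hs
      have hsp : (0:ℝ) < 1 + s := by linarith
      have hkey : (1 + r) ^ e * (1 + s) ^ q ≤ (1 + r + s) ^ (2 * α₁) * (1 + s) ^ (2 * α₂) := by
        have h1 : (1 + s) ^ q = (1 + s) ^ (2 * α₁ - e) * (1 + s) ^ (2 * α₂) := by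
          rw [← Real.rpow_add hsp]
        have h2 : (1 + r) ^ e * (1 + s) ^ (2 * α₁ - e) ≤ (1 + r + s) ^ (2 * α₁) := by
          have h3 : (1 + r) ^ e ≤ (1 + r + s) ^ e :=
            Real.rpow_le_rpow hrp.le (by linarith) he0
          have h4 : (1 + s) ^ (2 * α₁ - e) ≤ (1 + r + s) ^ (2 * α₁ - e) :=
            Real.rpow_le_rpow hsp.le (by linarith) (by linarith)
          calc (1 + r) ^ e * (1 + s) ^ (2 * α₁ - e)
              ≤ (1 + r + s) ^ e * (1 + r + s) ^ (2 * α₁ - e) :=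
                mul_le_mul h3 h4 (Real.rpow_nonneg hsp.le _) (Real.rpow_nonneg (by linarith) _)
            _ = (1 + r + s) ^ (2 * α₁) := by rw [← Real.rpow_add (by linarith)]; ring_nf
        calc (1 + r) ^ e * (1 + s) ^ q
            = ((1 + r) ^ e * (1 + s) ^ (2 * α₁ - e)) * (1 + s) ^ (2 * α₂) := by
              rw [h1]; ring
          _ ≤ (1 + r + s) ^ (2 * α₁) * (1 + s) ^ (2 * α₂) :=
              mul_le_mul_of_nonneg_right h2 (Real.rpow_nonneg hsp.le _)
      have hpos : (0:ℝ) < (1 + r) ^ e * (1 + s) ^ q := by positivity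
      calc s ^ ((d:ℝ) - 2) / ((1 + r + s) ^ (2 * α₁) * (1 + s) ^ (2 * α₂))
          ≤ s ^ ((d:ℝ) - 2) / ((1 + r) ^ e * (1 + s) ^ q) :=
            div_le_div_of_nonneg_left (by positivity) hpos hkey
        _ = (1 + r) ^ (-e) * (s ^ ((d:ℝ) - 2) * (1 + s) ^ (-q)) := by
            rw [Real.rpow_neg hrp.le, Real.rpow_neg hsp.le]
            field_simp
  calc Gint d α₁ α₂ r ≤ (1 + r) ^ (-e) * I := hmono
    _ ≤ (I + 1) * (1 + r) ^ (-e) := by nlinarith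

lemma contOn_shift_Ici (q : ℝ) :
    ContinuousOn (fun s : ℝ => (1 + s) ^ q) (Set.Ici 0) := by
  intro s hs
  have hs0 : (0:ℝ) ≤ s := hs
  have h1 : ContinuousAt (fun x : ℝ => x ^ q) (1 + s) :=
    Real.continuousAt_rpow_const _ _ (Or.inl (by positivity))
  exact (h1.comp (continuous_const.add continuous_id).continuousAt).continuousWithinAt

lemma split_bound {d : ℕ} (hd : 2 ≤ d) {α₁ α₂ : ℝ} (hα₁ : 0 < α₁) (hα₂ : 0 < α₂)
    (hconv : (d : ℝ) - 1 < 2 * α₁ + 2 * α₂) (h2 : 2 * α₂ < (d:ℝ) - 1) :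
    ∃ C > 0, ∀ r : ℝ, 1 ≤ r →
      Gint d α₁ α₂ r ≤ C * (1 + r) ^ (((d:ℝ) - 1) - 2 * α₂ - 2 * α₁) := by
  have hb : (0:ℝ) ≤ (d:ℝ) - 2 := by
    have : (2:ℝ) ≤ (d:ℝ) := by exact_mod_cast hd
    linarith
  set p : ℝ := (d:ℝ) - 2 - 2 * α₂ with hpdef
  have hp : (-1:ℝ) < p := by simp only [hpdef]; linarith
  have hpa : p + 1 < 2 * α₁ := by simp only [hpdef]; linarith
  set K : ℝ := max 1 (2 ^ (-p)) with hKdef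
  have hK1 : (1:ℝ) ≤ K := le_max_left _ _
  have hK0 : (0:ℝ) < K := by linarith
  have hp1 : (0:ℝ) < p + 1 := by linarith
  have hp2 : (0:ℝ) < 2 * α₁ - (p + 1) := by linarith
  refine ⟨1 / (p + 1) + K / (2 * α₁ - (p + 1)), by positivity, fun r hr => ?_⟩
  have hr0 : (0:ℝ) ≤ r := by linarith
  have hrp : (0:ℝ) < 1 + r := by linarith
  have hfi := f_integrableOn hd hα₁ hα₂ hconv hr0
  -- split the integral
  have hsplit : Gint d α₁ α₂ r =
      (∫ s in Set.Ioc 0 r, s ^ ((d:ℝ) - 2) / ((1 + r + s) ^ (2 * α₁) * (1 + s) ^ (2 * α₂))) +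
      ∫ s in Set.Ioi r, s ^ ((d:ℝ) - 2) / ((1 + r + s) ^ (2 * α₁) * (1 + s) ^ (2 * α₂)) := by
    rw [Gint, ← Set.Ioc_union_Ioi_eq_Ioi hr0]
    exact setIntegral_union Set.Ioc_disjoint_Ioi_same measurableSet_Ioi
      (hfi.mono_set (by rw [← Set.Ioc_union_Ioi_eq_Ioi hr0]; exact Set.subset_union_left))
      (hfi.mono_set (by rw [← Set.Ioc_union_Ioi_eq_Ioi hr0]; exact Set.subset_union_right))
  -- piece A
  have hA : (∫ s in Set.Ioc 0 r, s ^ ((d:ℝ) - 2) / ((1 + r + s) ^ (2 * α₁) * (1 + s) ^ (2 * α₂)))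
      ≤ (1 + r) ^ (-(2 * α₁)) * ((1 + r) ^ (p + 1) / (p + 1)) := by
    have hgint : IntegrableOn (fun s : ℝ => (1 + r) ^ (-(2 * α₁)) * (1 + s) ^ p)
        (Set.Ioc 0 r) := by
      refine IntegrableOn.mono_set ?_ Set.Ioc_subset_Icc_self
      exact (((contOn_shift_Ici p).mono (fun x hx => hx.1)).integrableOn_Icc).const_mul _
    have h1 : (∫ s in Set.Ioc 0 r,
        s ^ ((d:ℝ) - 2) / ((1 + r + s) ^ (2 * α₁) * (1 + s) ^ (2 * α₂)))
        ≤ ∫ s in Set.Ioc 0 r, (1 + r) ^ (-(2 * α₁)) * (1 + s) ^ p := by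
      refine integral_mono_of_nonneg ?_ hgint ?_
      · filter_upwards [ae_restrict_mem measurableSet_Ioc] with s hs
        have hs0 : (0:ℝ) < s := hs.1
        positivity
      · filter_upwards [ae_restrict_mem measurableSet_Ioc] with s hs
        have hs0 : (0:ℝ) < s := hs.1
        have hsp : (0:ℝ) < 1 + s := by linarith
        have step1 : s ^ ((d:ℝ) - 2) / ((1 + r + s) ^ (2 * α₁) * (1 + s) ^ (2 * α₂))
            ≤ (1 + s) ^ ((d:ℝ) - 2) / ((1 + r) ^ (2 * α₁) * (1 + s) ^ (2 * α₂)) := by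
          refine div_le_div₀ (Real.rpow_nonneg hsp.le _)
            (Real.rpow_le_rpow hs0.le (by linarith) hb) (by positivity) ?_
          exact mul_le_mul_of_nonneg_right
            (Real.rpow_le_rpow hrp.le (by linarith) (by positivity))
            (Real.rpow_nonneg hsp.le _)
        have step2 : (1 + s) ^ ((d:ℝ) - 2) / ((1 + r) ^ (2 * α₁) * (1 + s) ^ (2 * α₂))
            = (1 + r) ^ (-(2 * α₁)) * (1 + s) ^ p := by
          have e1 : (1 + s) ^ ((d:ℝ) - 2) = (1 + s) ^ p * (1 + s) ^ (2 * α₂) := by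
            rw [← Real.rpow_add hsp]
            congr 1
            rw [hpdef]; ring
          rw [e1, Real.rpow_neg hrp.le]
          have hB : (1 + s) ^ (2 * α₂) ≠ 0 := by positivity
          have hA : (1 + r) ^ (2 * α₁) ≠ 0 := by positivity
          field_simp
        calc s ^ ((d:ℝ) - 2) / ((1 + r + s) ^ (2 * α₁) * (1 + s) ^ (2 * α₂))
            ≤ (1 + s) ^ ((d:ℝ) - 2) / ((1 + r) ^ (2 * α₁) * (1 + s) ^ (2 * α₂)) := step1
          _ = (1 + r) ^ (-(2 * α₁)) * (1 + s) ^ p := step2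
    have h2' : (∫ s in Set.Ioc 0 r, (1 + r) ^ (-(2 * α₁)) * (1 + s) ^ p)
        = (1 + r) ^ (-(2 * α₁)) * ∫ s in Set.Ioc 0 r, (1 + s) ^ p := integral_const_mul _ _
    have h3 : (∫ s in Set.Ioc 0 r, (1 + s) ^ p) ≤ (1 + r) ^ (p + 1) / (p + 1) := by
      have heq : (∫ s in Set.Ioc 0 r, (1 + s) ^ p) = ∫ s in (0:ℝ)..r, (1 + s) ^ p := by
        rw [intervalIntegral.integral_of_le hr0]
      rw [heq]
      have hcomp : (∫ s in (0:ℝ)..r, (1 + s) ^ p) = ∫ x in (1:ℝ)..(1 + r), x ^ p := by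
        have := intervalIntegral.integral_comp_add_left (a := (0:ℝ)) (b := r)
          (fun x : ℝ => x ^ p) 1
        simpa using this
      rw [hcomp, integral_rpow (Or.inl hp)]
      rw [Real.one_rpow]
      have h4 : (0:ℝ) < p + 1 := by linarith
      have h5 : (0:ℝ) ≤ (1 + r) ^ (p + 1) := Real.rpow_nonneg hrp.le _
      exact div_le_div₀ h5 (by linarith) h4 le_rfl
    calc (∫ s in Set.Ioc 0 r,
          s ^ ((d:ℝ) - 2) / ((1 + r + s) ^ (2 * α₁) * (1 + s) ^ (2 * α₂)))
        ≤ (1 + r) ^ (-(2 * α₁)) * ∫ s in Set.Ioc 0 r, (1 + s) ^ p := by rw [← h2']; exact h1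
      _ ≤ (1 + r) ^ (-(2 * α₁)) * ((1 + r) ^ (p + 1) / (p + 1)) := by
          exact mul_le_mul_of_nonneg_left h3 (Real.rpow_nonneg hrp.le _)
  -- piece B
  have hBpc : (∫ s in Set.Ioi r, s ^ ((d:ℝ) - 2) / ((1 + r + s) ^ (2 * α₁) * (1 + s) ^ (2 * α₂)))
      ≤ K * ((1 + r + r) ^ (p + 1 - 2 * α₁) / (2 * α₁ - (p + 1))) := by
    have hq : p - 2 * α₁ < -1 := by linarith
    have hac : (0:ℝ) < (1 + r) + r := by linarith
    have hint : IntegrableOn (fun s : ℝ => ((1 + r) + s) ^ (p - 2 * α₁)) (Set.Ioi r) :=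
      shift_integrableOn hq hac
    have h1 : (∫ s in Set.Ioi r, s ^ ((d:ℝ) - 2) / ((1 + r + s) ^ (2 * α₁) * (1 + s) ^ (2 * α₂)))
        ≤ ∫ s in Set.Ioi r, K * ((1 + r) + s) ^ (p - 2 * α₁) := by
      refine integral_mono_of_nonneg ?_ (hint.const_mul _) ?_
      · filter_upwards [ae_restrict_mem measurableSet_Ioi] with s hs
        have hsr : r < s := hs
        have hs0 : (0:ℝ) < s := by linarith
        positivity
      · filter_upwards [ae_restrict_mem measurableSet_Ioi] with s hs
        have hsr : r < s := hs
        have hs0 : (0:ℝ) < s := by linarith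
        have hsp : (0:ℝ) < 1 + s := by linarith
        have hrsp : (0:ℝ) < 1 + r + s := by linarith
        have hKp : (1 + s) ^ p ≤ K * (1 + r + s) ^ p := by
          rcases le_or_gt 0 p with hp0 | hp0
          · calc (1 + s) ^ p ≤ (1 + r + s) ^ p := Real.rpow_le_rpow hsp.le (by linarith) hp0
              _ = 1 * (1 + r + s) ^ p := (one_mul _).symm
              _ ≤ K * (1 + r + s) ^ p :=
                mul_le_mul_of_nonneg_right hK1 (Real.rpow_nonneg hrsp.le _)
          · have h2s : 1 + r + s ≤ 2 * (1 + s) := by linarith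
            have h3 : (2 * (1 + s)) ^ p ≤ (1 + r + s) ^ p :=
              Real.rpow_le_rpow_of_nonpos hrsp h2s hp0.le
            have h4 : (2 * (1 + s)) ^ p = 2 ^ p * (1 + s) ^ p :=
              Real.mul_rpow (by norm_num) hsp.le
            have h5 : (1 + s) ^ p = 2 ^ (-p) * (2 ^ p * (1 + s) ^ p) := by
              rw [← mul_assoc, ← Real.rpow_add two_pos]
              norm_num
            rw [h5]
            have h6 : 2 ^ (-p) * (2 ^ p * (1 + s) ^ p) ≤ 2 ^ (-p) * (1 + r + s) ^ p := by
              apply mul_le_mul_of_nonneg_left _ (Real.rpow_nonneg (by norm_num) _)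
              rw [← h4]; exact h3
            refine h6.trans (mul_le_mul_of_nonneg_right (le_max_right _ _)
              (Real.rpow_nonneg hrsp.le _))
        have e1 : (1 + s) ^ ((d:ℝ) - 2) = (1 + s) ^ p * (1 + s) ^ (2 * α₂) := by
          rw [← Real.rpow_add hsp]
          congr 1
          rw [hpdef]; ring
        have hA0 : (1 + r + s) ^ (2 * α₁) ≠ 0 := by positivity
        have hB0 : (1 + s) ^ (2 * α₂) ≠ 0 := by positivity
        have step1 : s ^ ((d:ℝ) - 2) / ((1 + r + s) ^ (2 * α₁) * (1 + s) ^ (2 * α₂))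
            ≤ (1 + s) ^ ((d:ℝ) - 2) / ((1 + r + s) ^ (2 * α₁) * (1 + s) ^ (2 * α₂)) := by
          apply div_le_div₀ (Real.rpow_nonneg hsp.le _)
            (Real.rpow_le_rpow hs0.le (by linarith) hb) (by positivity) le_rfl
        have step2 : (1 + s) ^ ((d:ℝ) - 2) / ((1 + r + s) ^ (2 * α₁) * (1 + s) ^ (2 * α₂))
            = (1 + s) ^ p / (1 + r + s) ^ (2 * α₁) := by
          rw [e1]
          field_simp
        have step3 : (1 + s) ^ p / (1 + r + s) ^ (2 * α₁)
            ≤ (K * (1 + r + s) ^ p) / (1 + r + s) ^ (2 * α₁) :=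
          div_le_div₀ (by positivity) hKp (by positivity) le_rfl
        have step4 : (K * (1 + r + s) ^ p) / (1 + r + s) ^ (2 * α₁)
            = K * ((1 + r) + s) ^ (p - 2 * α₁) := by
          rw [show (1 + r) + s = 1 + r + s from rfl, mul_div_assoc, ← Real.rpow_sub hrsp]
        calc s ^ ((d:ℝ) - 2) / ((1 + r + s) ^ (2 * α₁) * (1 + s) ^ (2 * α₂))
            ≤ (1 + s) ^ ((d:ℝ) - 2) / ((1 + r + s) ^ (2 * α₁) * (1 + s) ^ (2 * α₂)) := step1
          _ = (1 + s) ^ p / (1 + r + s) ^ (2 * α₁) := step2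
          _ ≤ (K * (1 + r + s) ^ p) / (1 + r + s) ^ (2 * α₁) := step3
          _ = K * ((1 + r) + s) ^ (p - 2 * α₁) := step4
    have h2v : (∫ s in Set.Ioi r, K * ((1 + r) + s) ^ (p - 2 * α₁))
        = K * (((1 + r) + r) ^ ((p - 2 * α₁) + 1) / (-((p - 2 * α₁) + 1))) := by
      rw [integral_const_mul, shift_integral hq hac]
    have hexp : (p - 2 * α₁) + 1 = p + 1 - 2 * α₁ := by ring
    have hneg : -((p - 2 * α₁) + 1) = 2 * α₁ - (p + 1) := by ring
    have h3v : ((1 + r) + r) ^ (p + 1 - 2 * α₁) ≤ (1 + r) ^ (p + 1 - 2 * α₁) :=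
      Real.rpow_le_rpow_of_nonpos hrp (by linarith) (by linarith)
    calc (∫ s in Set.Ioi r, s ^ ((d:ℝ) - 2) / ((1 + r + s) ^ (2 * α₁) * (1 + s) ^ (2 * α₂)))
        ≤ ∫ s in Set.Ioi r, K * ((1 + r) + s) ^ (p - 2 * α₁) := h1
      _ = K * (((1 + r) + r) ^ (p + 1 - 2 * α₁) / (2 * α₁ - (p + 1))) := by
          rw [h2v, hneg, hexp]
      _ = K * ((1 + r + r) ^ (p + 1 - 2 * α₁) / (2 * α₁ - (p + 1))) := rfl
  -- combine
  have hcomb : (1 + r) ^ (-(2 * α₁)) * ((1 + r) ^ (p + 1) / (p + 1))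
      + K * ((1 + r + r) ^ (p + 1 - 2 * α₁) / (2 * α₁ - (p + 1)))
      ≤ (1 / (p + 1) + K / (2 * α₁ - (p + 1))) * (1 + r) ^ (p + 1 - 2 * α₁) := by
    have hcb : (1 + r) ^ (-(2 * α₁)) * (1 + r) ^ (p + 1) = (1 + r) ^ (p + 1 - 2 * α₁) := by
      rw [← Real.rpow_add hrp]
      congr 1
      ring
    have h3v : (1 + r + r) ^ (p + 1 - 2 * α₁) ≤ (1 + r) ^ (p + 1 - 2 * α₁) :=
      Real.rpow_le_rpow_of_nonpos hrp (by linarith) (by linarith)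
    have t1 : (1 + r) ^ (-(2 * α₁)) * ((1 + r) ^ (p + 1) / (p + 1))
        = (1 / (p + 1)) * (1 + r) ^ (p + 1 - 2 * α₁) := by
      rw [← hcb]; ring
    have t2 : K * ((1 + r + r) ^ (p + 1 - 2 * α₁) / (2 * α₁ - (p + 1)))
        ≤ (K / (2 * α₁ - (p + 1))) * (1 + r) ^ (p + 1 - 2 * α₁) := by
      rw [div_mul_eq_mul_div, mul_div_assoc]
      apply mul_le_mul_of_nonneg_left _ hK0.le
      exact div_le_div₀ (Real.rpow_nonneg hrp.le _) h3v hp2 le_rfl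
    calc (1 + r) ^ (-(2 * α₁)) * ((1 + r) ^ (p + 1) / (p + 1))
        + K * ((1 + r + r) ^ (p + 1 - 2 * α₁) / (2 * α₁ - (p + 1)))
        ≤ (1 / (p + 1)) * (1 + r) ^ (p + 1 - 2 * α₁)
          + (K / (2 * α₁ - (p + 1))) * (1 + r) ^ (p + 1 - 2 * α₁) := by
          rw [t1]; exact add_le_add_right t2 _
      _ = (1 / (p + 1) + K / (2 * α₁ - (p + 1))) * (1 + r) ^ (p + 1 - 2 * α₁) := by ring
  have hfin : p + 1 - 2 * α₁ = ((d:ℝ) - 1) - 2 * α₂ - 2 * α₁ := by rw [hpdef]; ring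
  rw [hsplit, ← hfin]
  exact le_trans (add_le_add hA hBpc) hcomb


/-- key scalar integral estimate. Let `d ≥ 2`, `α₁, α₂ > 0` with
`2α₁ + 2α₂ > d - 1`. Then `G(r) ≤ C (1+r)^{-2α₀}` for `r ≥ 1` where:
`α₀ = α₁ + α₂ - (d-1)/2` if `max(α₁,α₂) < (d-1)/2`; `α₀` is any positive value
strictly less than `min(α₁,α₂)` if `max(α₁,α₂) = (d-1)/2`; and `α₀ = min(α₁,α₂)`
if `max(α₁,α₂) > (d-1)/2`. -/
theorem Gint_decay (d : ℕ) (hd : 2 ≤ d) (α₁ α₂ : ℝ) (hα₁ : 0 < α₁) (hα₂ : 0 < α₂)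
    (hconv : (d : ℝ) - 1 < 2 * α₁ + 2 * α₂) :
    (max α₁ α₂ < ((d : ℝ) - 1) / 2 →
      ∃ C > 0, ∀ r : ℝ, 1 ≤ r →
        Gint d α₁ α₂ r ≤ C * (1 + r) ^ (-2 * (α₁ + α₂ - ((d : ℝ) - 1) / 2))) ∧
    (max α₁ α₂ = ((d : ℝ) - 1) / 2 →
      ∀ α₀ : ℝ, 0 < α₀ → α₀ < min α₁ α₂ →
        ∃ C > 0, ∀ r : ℝ, 1 ≤ r →
          Gint d α₁ α₂ r ≤ C * (1 + r) ^ (-2 * α₀)) ∧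
    (max α₁ α₂ > ((d : ℝ) - 1) / 2 →
      ∃ C > 0, ∀ r : ℝ, 1 ≤ r →
        Gint d α₁ α₂ r ≤ C * (1 + r) ^ (-2 * min α₁ α₂)) := by
  have hsum : min α₁ α₂ + max α₁ α₂ = α₁ + α₂ := min_add_max α₁ α₂
  refine ⟨?_, ?_, ?_⟩
  · intro hmax
    have h2 : 2 * α₂ < (d:ℝ) - 1 := by
      have := le_max_right α₁ α₂
      linarith
    obtain ⟨C, hC, hG⟩ := split_bound hd hα₁ hα₂ hconv h2
    refine ⟨C, hC, fun r hr => ?_⟩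
    have h := hG r hr
    have heq : ((d:ℝ) - 1) - 2 * α₂ - 2 * α₁ = -2 * (α₁ + α₂ - ((d:ℝ) - 1) / 2) := by ring
    rwa [heq] at h
  · intro hmax α₀ hα₀ hmin
    have hmin1 : α₀ < α₁ := lt_of_lt_of_le hmin (min_le_left _ _)
    obtain ⟨C, hC, hG⟩ := theta_bound (e := 2 * α₀) hd hα₁ hα₂ (by linarith) (by linarith)
      (by linarith)
    refine ⟨C, hC, fun r hr => ?_⟩
    have h := hG r hr
    rwa [show -(2 * α₀) = -2 * α₀ by ring] at h
  · intro hmax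
    have hm1 : min α₁ α₂ ≤ α₁ := min_le_left _ _
    have hm2 : min α₁ α₂ ≤ α₂ := min_le_right _ _
    have hm0 : 0 < min α₁ α₂ := lt_min hα₁ hα₂
    obtain ⟨C, hC, hG⟩ := theta_bound (e := 2 * min α₁ α₂) hd hα₁ hα₂ (by linarith)
      (by linarith) (by linarith)
    refine ⟨C, hC, fun r hr => ?_⟩
    have h := hG r hr
    rwa [show -(2 * min α₁ α₂) = -2 * min α₁ α₂ by ring] at h
end

section
/- Let d ≥ 1 and let p, q, α ∈ (1,∞) satisfy α < p and 1/α ≥ 1/(dp) + 1/q. Let σ₁, σ₂ ≥ 0 satisfy σ₁ + σ₂ = d - 2/p - d/q and σ₁, σ₂ < min(d/2, d/2 - 2/p + 1). Then there exist p₁, q₁, p₂, q₂, α₁, α₂ ∈ (1,∞) such that: 2/p_j + d/q_j = d - 2σ_j for j = 1,2; 1/α_j ≥ 1/(d p_j) + 1/q_j; α_j < p_j; 1/α = 1/(2α₁) + 1/(2α₂); and 1/p = 1/(2p₁) + 1/(2p₂). -/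
set_option maxHeartbeats 1000000 in
private lemma key_split (D u v w σ₁ σ₂ : ℝ) (hD : 1 ≤ D)
    (hu0 : 0 < u) (hu1 : u < 1) (hv0 : 0 < v) (hw1 : w < 1) (huw : u < w)
    (hadm : u + D * v ≤ D * w)
    (hσ₁0 : 0 ≤ σ₁) (hσ₂0 : 0 ≤ σ₂)
    (hsum : σ₁ + σ₂ = D - 2 * u - D * v)
    (hb₁ : σ₁ < D / 2) (hb₁' : σ₁ < D / 2 - 2 * u + 1)
    (hb₂ : σ₂ < D / 2) (hb₂' : σ₂ < D / 2 - 2 * u + 1) :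
    ∃ x₁ x₂ y₁ y₂ : ℝ,
      x₁ + x₂ = 2 * u ∧ y₁ + y₂ = 2 * w ∧
      0 < x₁ ∧ x₁ < 1 ∧ 0 < x₂ ∧ x₂ < 1 ∧
      x₁ < y₁ ∧ x₂ < y₂ ∧ y₁ < 1 ∧ y₂ < 1 ∧
      σ₁ + x₁ < D / 2 ∧ σ₂ + x₂ < D / 2 ∧
      D - 2 * σ₁ - x₁ ≤ D * y₁ ∧ D - 2 * σ₂ - x₂ ≤ D * y₂ := by
  have hD0 : (0:ℝ) < D := by linarith
  have hE : (0:ℝ) < D + 1 := by linarith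
  have hEne : D + 1 ≠ 0 := ne_of_gt hE
  have hDwu : 0 < D * (w - u) := mul_pos hD0 (by linarith)
  have hDv : 0 < D * v := mul_pos hD0 hv0
  have hDu : 0 < D * u := mul_pos hD0 hu0
  set B₁ : ℝ := D * (2*w - 1 - u) + 2*σ₁ + u with hB₁
  set B₂ : ℝ := D * (2*w - 1 - u) + 2*σ₂ + u with hB₂
  set lo : ℝ := max (max (-((D+1)*u)) ((D+1)*(u-1))) (max ((D+1)*(σ₂+u-D/2)) (-B₁)) with hlo
  set hi : ℝ := min (min ((D+1)*u) ((D+1)*(1-u))) (min ((D+1)*(D/2-σ₁-u)) B₂) with hhi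
  -- the sixteen pairwise inequalities
  have h11 : -((D+1)*u) < (D+1)*u := by linarith [hDu]
  have h21 : (D+1)*(u-1) < (D+1)*u := by linarith
  have h31 : (D+1)*(σ₂+u-D/2) < (D+1)*u := by linarith [mul_pos hE (show (0:ℝ) < D/2 - σ₂ by linarith)]
  have h41 : -B₁ < (D+1)*u := by rw [hB₁]; linarith
  have h12 : -((D+1)*u) < (D+1)*(1-u) := by linarith
  have h22 : (D+1)*(u-1) < (D+1)*(1-u) := by linarith [mul_pos hE (show (0:ℝ) < 1 - u by linarith)]
  have h32 : (D+1)*(σ₂+u-D/2) < (D+1)*(1-u) := by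
    linarith [mul_pos hE (show (0:ℝ) < D/2 - σ₂ - 2*u + 1 by linarith)]
  have h42 : -B₁ < (D+1)*(1-u) := by rw [hB₁]; linarith [hDwu]
  have h13 : -((D+1)*u) < (D+1)*(D/2-σ₁-u) := by
    linarith [mul_pos hE (show (0:ℝ) < D/2 - σ₁ by linarith)]
  have h23 : (D+1)*(u-1) < (D+1)*(D/2-σ₁-u) := by
    linarith [mul_pos hE (show (0:ℝ) < D/2 - σ₁ - 2*u + 1 by linarith)]
  have h33 : (D+1)*(σ₂+u-D/2) < (D+1)*(D/2-σ₁-u) := by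
    linarith [mul_pos hE (show (0:ℝ) < D - σ₁ - σ₂ - 2*u by linarith [hDv])]
  have h43 : -B₁ < (D+1)*(D/2-σ₁-u) := by
    rw [hB₁]
    linarith [hDwu, mul_nonneg (show (0:ℝ) ≤ D - 1 by linarith) (show (0:ℝ) ≤ D/2 - σ₁ by linarith)]
  have h14 : -((D+1)*u) < B₂ := by rw [hB₂]; linarith
  have h24 : (D+1)*(u-1) < B₂ := by rw [hB₂]; linarith [hDwu]
  have h34 : (D+1)*(σ₂+u-D/2) < B₂ := by
    rw [hB₂]
    linarith [hDwu, mul_nonneg (show (0:ℝ) ≤ D - 1 by linarith) (show (0:ℝ) ≤ D/2 - σ₂ by linarith)]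
  have h44 : -B₁ < B₂ := by rw [hB₁, hB₂]; linarith [hDwu]
  have hlt : lo < hi := by
    rw [hlo, hhi]
    exact lt_min
      (lt_min (max_lt (max_lt h11 h21) (max_lt h31 h41))
              (max_lt (max_lt h12 h22) (max_lt h32 h42)))
      (lt_min (max_lt (max_lt h13 h23) (max_lt h33 h43))
              (max_lt (max_lt h14 h24) (max_lt h34 h44)))
  set s : ℝ := (lo + hi)/2 with hs
  have hs1 : lo < s := by rw [hs]; linarith
  have hs2 : s < hi := by rw [hs]; linarith
  have hg1 : -((D+1)*u) < s := by
    refine lt_of_le_of_lt ?_ hs1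
    rw [hlo]; exact le_trans (le_max_left _ _) (le_max_left _ _)
  have hg2 : (D+1)*(u-1) < s := by
    refine lt_of_le_of_lt ?_ hs1
    rw [hlo]; exact le_trans (le_max_right _ _) (le_max_left _ _)
  have hg3 : (D+1)*(σ₂+u-D/2) < s := by
    refine lt_of_le_of_lt ?_ hs1
    rw [hlo]; exact le_trans (le_max_left _ _) (le_max_right _ _)
  have hg4 : -B₁ < s := by
    refine lt_of_le_of_lt ?_ hs1
    rw [hlo]; exact le_trans (le_max_right _ _) (le_max_right _ _)
  have hg5 : s < (D+1)*u := by
    refine lt_of_lt_of_le hs2 ?_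
    rw [hhi]; exact le_trans (min_le_left _ _) (min_le_left _ _)
  have hg6 : s < (D+1)*(1-u) := by
    refine lt_of_lt_of_le hs2 ?_
    rw [hhi]; exact le_trans (min_le_left _ _) (min_le_right _ _)
  have hg7 : s < (D+1)*(D/2-σ₁-u) := by
    refine lt_of_lt_of_le hs2 ?_
    rw [hhi]; exact le_trans (min_le_right _ _) (min_le_left _ _)
  have hg8 : s < B₂ := by
    refine lt_of_lt_of_le hs2 ?_
    rw [hhi]; exact le_trans (min_le_right _ _) (min_le_right _ _)
  set t : ℝ := s / (D+1) with htdef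
  have ht : (D+1) * t = s := by rw [htdef]; field_simp
  have ht1 : -u < t := by
    have h2 : (D+1)*(-u) < (D+1)*t := by rw [ht]; linarith
    exact lt_of_mul_lt_mul_left h2 hE.le
  have ht2 : t < u := by
    have h2 : (D+1)*t < (D+1)*u := by rw [ht]; exact hg5
    exact lt_of_mul_lt_mul_left h2 hE.le
  have ht3 : t < 1 - u := by
    have h2 : (D+1)*t < (D+1)*(1-u) := by rw [ht]; exact hg6
    exact lt_of_mul_lt_mul_left h2 hE.le
  have ht4 : u - 1 < t := by
    have h2 : (D+1)*(u-1) < (D+1)*t := by rw [ht]; exact hg2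
    exact lt_of_mul_lt_mul_left h2 hE.le
  have ht5 : t < D/2 - σ₁ - u := by
    have h2 : (D+1)*t < (D+1)*(D/2-σ₁-u) := by rw [ht]; exact hg7
    exact lt_of_mul_lt_mul_left h2 hE.le
  have ht6 : σ₂ + u - D/2 < t := by
    have h2 : (D+1)*(σ₂+u-D/2) < (D+1)*t := by rw [ht]; exact hg3
    exact lt_of_mul_lt_mul_left h2 hE.le
  have hDt : D * t = s - t := by linarith [ht]
  -- the y-side
  set A₁ : ℝ := (D - 2*σ₁ - (u+t))/D with hA₁def
  set U₃ : ℝ := (2*D*w - (D - 2*σ₂ - (u-t)))/D with hU₃def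
  set L : ℝ := max (max (u+t) (2*w-1)) A₁ with hLdef
  set U : ℝ := min (min 1 (2*w - (u-t))) U₃ with hUdef
  have hp1 : u + t < 1 := by linarith
  have hp2 : u + t < 2*w - (u-t) := by linarith
  have hp3 : u + t < U₃ := by
    rw [hU₃def, lt_div_iff₀ hD0]
    rw [hB₂] at hg8
    linarith [hDt, hg8]
  have hp4 : 2*w - 1 < 1 := by linarith
  have hp5 : 2*w - 1 < 2*w - (u-t) := by linarith
  have hp6 : 2*w - 1 < U₃ := by
    rw [hU₃def, lt_div_iff₀ hD0]
    linarith [hσ₂0, ht2]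
  have hp7 : A₁ < 1 := by
    rw [hA₁def, div_lt_one hD0]; linarith
  have hp8 : A₁ < 2*w - (u-t) := by
    rw [hA₁def, div_lt_iff₀ hD0]
    rw [hB₁] at hg4
    linarith [hDt, hg4]
  have hp9 : A₁ ≤ U₃ := by
    rw [hA₁def, hU₃def]
    exact (div_le_div_iff_of_pos_right hD0).mpr (by linarith)
  have hLU : L ≤ U := by
    rw [hLdef, hUdef]
    exact max_le (max_le (le_min (le_min hp1.le hp2.le) hp3.le)
                          (le_min (le_min hp4.le hp5.le) hp6.le))
                 (le_min (le_min hp7.le hp8.le) hp9)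
  have hxU : u + t < U := by rw [hUdef]; exact lt_min (lt_min hp1 hp2) hp3
  have h2wU : 2*w - 1 < U := by rw [hUdef]; exact lt_min (lt_min hp4 hp5) hp6
  have hL1 : L < 1 := by rw [hLdef]; exact max_lt (max_lt hp1 hp4) hp7
  have hL2 : L < 2*w - (u-t) := by rw [hLdef]; exact max_lt (max_lt hp2 hp5) hp8
  have hxL : u + t ≤ L := by rw [hLdef]; exact le_trans (le_max_left _ _) (le_max_left _ _)
  have h2wL : 2*w - 1 ≤ L := by rw [hLdef]; exact le_trans (le_max_right _ _) (le_max_left _ _)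
  have hAL : A₁ ≤ L := by rw [hLdef]; exact le_max_right _ _
  have hU1 : U ≤ 1 := by rw [hUdef]; exact le_trans (min_le_left _ _) (min_le_left _ _)
  have hU2 : U ≤ 2*w - (u-t) := by rw [hUdef]; exact le_trans (min_le_left _ _) (min_le_right _ _)
  have hU3 : U ≤ U₃ := by rw [hUdef]; exact min_le_right _ _
  refine ⟨u + t, u - t, (L+U)/2, 2*w - (L+U)/2, by ring, by ring, by linarith, by linarith,
    by linarith, by linarith, by linarith, by linarith, by linarith, by linarith,
    by linarith, by linarith, ?_, ?_⟩
  · -- D - 2σ₁ - (u+t) ≤ D * ((L+U)/2)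
    have hy : A₁ ≤ (L+U)/2 := by linarith
    rw [hA₁def, div_le_iff₀ hD0] at hy
    linarith
  · -- D - 2σ₂ - (u-t) ≤ D * (2w - (L+U)/2)
    have hy : (L+U)/2 ≤ U₃ := by linarith
    rw [hU₃def, le_div_iff₀ hD0] at hy
    linarith

/-- exponent-splitting lemma for asymmetric-derivative Strichartz estimates.
Let `d ≥ 1` and `p, q, α ∈ (1,∞)` with `α < p` and `1/α ≥ 1/(dp) + 1/q`. Let
`σ₁, σ₂ ≥ 0` satisfy `σ₁ + σ₂ = d - 2/p - d/q` and `σ₁, σ₂ < min(d/2, d/2 - 2/p + 1)`.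
Then there exist `p₁, q₁, p₂, q₂, α₁, α₂ ∈ (1,∞)` with `2/pⱼ + d/qⱼ = d - 2σⱼ`,
`1/αⱼ ≥ 1/(d pⱼ) + 1/qⱼ`, `αⱼ < pⱼ`, `1/α = 1/(2α₁) + 1/(2α₂)` and
`1/p = 1/(2p₁) + 1/(2p₂)`. -/
theorem exponent_splitting (d : ℕ) (hd : 1 ≤ d) (p q α σ₁ σ₂ : ℝ)
    (hp : 1 < p) (hq : 1 < q) (hα : 1 < α)
    (hαp : α < p) (hadm : 1 / (d * p) + 1 / q ≤ 1 / α)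
    (hσ₁ : 0 ≤ σ₁) (hσ₂ : 0 ≤ σ₂)
    (hsum : σ₁ + σ₂ = d - 2 / p - d / q)
    (hσ₁' : σ₁ < min ((d : ℝ) / 2) ((d : ℝ) / 2 - 2 / p + 1))
    (hσ₂' : σ₂ < min ((d : ℝ) / 2) ((d : ℝ) / 2 - 2 / p + 1)) :
    ∃ p₁ q₁ p₂ q₂ α₁ α₂ : ℝ,
      1 < p₁ ∧ 1 < q₁ ∧ 1 < p₂ ∧ 1 < q₂ ∧ 1 < α₁ ∧ 1 < α₂ ∧
      2 / p₁ + d / q₁ = d - 2 * σ₁ ∧ 2 / p₂ + d / q₂ = d - 2 * σ₂ ∧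
      1 / (d * p₁) + 1 / q₁ ≤ 1 / α₁ ∧ 1 / (d * p₂) + 1 / q₂ ≤ 1 / α₂ ∧
      α₁ < p₁ ∧ α₂ < p₂ ∧
      1 / α = 1 / (2 * α₁) + 1 / (2 * α₂) ∧
      1 / p = 1 / (2 * p₁) + 1 / (2 * p₂) := by
  have hD1 : (1:ℝ) ≤ (d:ℝ) := by exact_mod_cast hd
  have hD0 : (0:ℝ) < (d:ℝ) := by linarith
  have hDne : (d:ℝ) ≠ 0 := ne_of_gt hD0
  have hp0 : (0:ℝ) < p := by linarith
  have hq0 : (0:ℝ) < q := by linarith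
  have hα0 : (0:ℝ) < α := by linarith
  have hu0 : 0 < 1/p := by positivity
  have hu1 : 1/p < 1 := by rw [div_lt_one hp0]; exact hp
  have hv0 : 0 < 1/q := by positivity
  have hw1 : 1/α < 1 := by rw [div_lt_one hα0]; exact hα
  have huw : 1/p < 1/α := one_div_lt_one_div_of_lt hα0 hαp
  have hadm' : 1/p + (d:ℝ)*(1/q) ≤ (d:ℝ)*(1/α) := by
    have h := mul_le_mul_of_nonneg_left hadm hD0.le
    calc 1/p + (d:ℝ)*(1/q) = (d:ℝ) * (1/((d:ℝ)*p) + 1/q) := by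
          field_simp
      _ ≤ (d:ℝ)*(1/α) := h
  have hsum' : σ₁ + σ₂ = (d:ℝ) - 2*(1/p) - (d:ℝ)*(1/q) := by rw [hsum]; ring
  have hb₁ := lt_min_iff.mp hσ₁'
  have hb₂ := lt_min_iff.mp hσ₂'
  have hb₁' : σ₁ < (d:ℝ)/2 - 2*(1/p) + 1 := by
    have h := hb₁.2; have e : (2:ℝ)/p = 2*(1/p) := by ring
    linarith [e ▸ h]
  have hb₂' : σ₂ < (d:ℝ)/2 - 2*(1/p) + 1 := by
    have h := hb₂.2; have e : (2:ℝ)/p = 2*(1/p) := by ring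
    linarith [e ▸ h]
  obtain ⟨x₁, x₂, y₁, y₂, hx, hy, hx₁0, hx₁1, hx₂0, hx₂1, hxy₁, hxy₂, hy₁1, hy₂1,
      hr₁, hr₂, hA₁, hA₂⟩ :=
    key_split (d:ℝ) (1/p) (1/q) (1/α) σ₁ σ₂ hD1 hu0 hu1 hv0 hw1 huw hadm'
      hσ₁ hσ₂ hsum' hb₁.1 hb₁' hb₂.1 hb₂'
  have hy₁0 : 0 < y₁ := lt_trans hx₁0 hxy₁
  have hy₂0 : 0 < y₂ := lt_trans hx₂0 hxy₂
  have he₁ : 0 < (d:ℝ) - 2*σ₁ - 2*x₁ := by linarith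
  have he₂ : 0 < (d:ℝ) - 2*σ₂ - 2*x₂ := by linarith
  have he₁ne : (d:ℝ) - 2*σ₁ - 2*x₁ ≠ 0 := ne_of_gt he₁
  have he₂ne : (d:ℝ) - 2*σ₂ - 2*x₂ ≠ 0 := ne_of_gt he₂
  have hx₁ne : x₁ ≠ 0 := ne_of_gt hx₁0
  have hx₂ne : x₂ ≠ 0 := ne_of_gt hx₂0
  have hy₁ne : y₁ ≠ 0 := ne_of_gt hy₁0
  have hy₂ne : y₂ ≠ 0 := ne_of_gt hy₂0
  refine ⟨1/x₁, (d:ℝ)/((d:ℝ) - 2*σ₁ - 2*x₁), 1/x₂, (d:ℝ)/((d:ℝ) - 2*σ₂ - 2*x₂),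
    1/y₁, 1/y₂, ?_, ?_, ?_, ?_, ?_, ?_, ?_, ?_, ?_, ?_, ?_, ?_, ?_, ?_⟩
  · exact (one_lt_div hx₁0).mpr hx₁1
  · rw [one_lt_div he₁]; linarith
  · exact (one_lt_div hx₂0).mpr hx₂1
  · rw [one_lt_div he₂]; linarith
  · exact (one_lt_div hy₁0).mpr hy₁1
  · exact (one_lt_div hy₂0).mpr hy₂1
  · field_simp
    ring
  · field_simp
    ring
  · have e1 : 1/((d:ℝ)*(1/x₁)) = x₁/(d:ℝ) := by
      rw [mul_one_div, one_div_div]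
    rw [e1, one_div_div, one_div_one_div]
    rw [← add_div, div_le_iff₀ hD0]
    linarith [hA₁]
  · have e1 : 1/((d:ℝ)*(1/x₂)) = x₂/(d:ℝ) := by
      rw [mul_one_div, one_div_div]
    rw [e1, one_div_div, one_div_one_div]
    rw [← add_div, div_le_iff₀ hD0]
    linarith [hA₂]
  · exact one_div_lt_one_div_of_lt hx₁0 hxy₁
  · exact one_div_lt_one_div_of_lt hx₂0 hxy₂
  · rw [mul_one_div, one_div_div, mul_one_div, one_div_div]
    linarith [hy]
  · rw [mul_one_div, one_div_div, mul_one_div, one_div_div]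
    linarith [hx]
end
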